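/- Let N ≥ 2 be an integer, α a real number, and Ω ⊆ ℝ^N \ {0} an open set. Let u : Ω → ℝ be a C² function with ∇u(x) ≠ 0 for every x ∈ Ω, satisfying pointwise −div( |∇u|^{N−2} ∇u )(x) = |x|^{Nα} e^{u(x)} on Ω. Then the function v := e^{−u/N} satisfies, for every x ∈ Ω, div( |∇v|^{N−2} ∇v )(x) = (1/v(x)) · ( (N−1) |∇v(x)|^N + |x|^{Nα} N^{1−N} ). -/

import Mathlib

open MeasureTheory Filter
open scoped RealInnerProductSpace Topology

noncomputable section

/-- Euclidean divergence of a vector field on `ℝ^N`. -/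
def ediv {N : ℕ} (F : EuclideanSpace ℝ (Fin N) → EuclideanSpace ℝ (Fin N))
    (x : EuclideanSpace ℝ (Fin N)) : ℝ :=
  ∑ i, fderiv ℝ F x (EuclideanSpace.single i 1) i

private lemma key_algebra (n B V r : ℝ) (hn : 0 < n) (hV : 0 < V) (hr : 0 < r) :
    -(n⁻¹ * V) ^ (n - 1) * -(B * V ^ (-n)) +
      -((n - 1) * (n⁻¹ * V) ^ (n - 1 - 1) * (n⁻¹ * (-V / n * (r ^ (n - 2) * r ^ 2)))) =
    1 / V * ((n - 1) * (V / n * r) ^ n + B * n ^ (1 - n)) := by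
  have hnV : (0:ℝ) < n⁻¹ * V := by positivity
  have e2 : n - 1 - 1 = n - 2 := by ring
  have e1 : (n⁻¹*V) ^ (n-1) = (n⁻¹*V)^(n-2) * (n⁻¹*V) := by
    rw [show n - 1 = (n-2)+1 by ring, Real.rpow_add hnV, Real.rpow_one]
  have eA : (n⁻¹*V)^n = (n⁻¹*V)^(n-2) * ((n⁻¹*V) * (n⁻¹*V)) := by
    have h := Real.rpow_add hnV (n-2) 2
    rw [show (n-2)+(2:ℝ) = n by ring] at h
    rw [h]
    congr 1
    rw [show (2:ℝ) = ((2:ℕ):ℝ) by norm_num, Real.rpow_natCast]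
    ring
  have eB : r^n = r^(n-2) * r^2 := by
    have h := Real.rpow_add hr (n-2) 2
    rw [show (n-2)+(2:ℝ) = n by ring] at h
    rw [h]
    congr 1
    rw [show (2:ℝ) = ((2:ℕ):ℝ) by norm_num, Real.rpow_natCast]
  have e3 : (V / n * r) ^ n = ((n⁻¹*V)^(n-2) * (n⁻¹*V) * (n⁻¹*V)) * (r^(n-2) * r^2) := by
    rw [show V / n * r = (n⁻¹*V) * r by ring,
      Real.mul_rpow (le_of_lt hnV) (le_of_lt hr), eA, eB]
    ring
  have e6 : (n⁻¹*V)^(n-2) = n⁻¹^(n-2) * V^(n-2) :=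
    Real.mul_rpow (by positivity) (le_of_lt hV)
  have e7 : n ^ (1-n) = n⁻¹^(n-2) * n⁻¹ := by
    rw [show (1-n) = (-(n-2)) + -1 by ring, Real.rpow_add hn,
      Real.rpow_neg_one, Real.inv_rpow hn.le, ← Real.rpow_neg hn.le]
  have e8 : V ^ (-n) = (V^(n-2))⁻¹ * (V⁻¹ * V⁻¹) := by
    rw [show (-n) = (-(n-2)) + -1 + -1 by ring, Real.rpow_add hV, Real.rpow_add hV,
      Real.rpow_neg_one, Real.rpow_neg hV.le]
    ring
  rw [e2, e1, e3, e6, e7, e8]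
  have h1 : V ^ (n-2) ≠ 0 := (Real.rpow_pos_of_pos hV _).ne'
  have h2 : n⁻¹ ^ (n-2) ≠ 0 := (Real.rpow_pos_of_pos (by positivity) _).ne'
  field_simp
  ring

/-- If `u` is a pointwise solution of `-Δ_N u = |x|^{Nα} e^u` on an open set
`Ω ⊆ ℝ^N \ {0}` with nonvanishing gradient, then `v := e^{-u/N}` satisfies
`Δ_N v = (1/v)((N-1)|∇v|^N + |x|^{Nα} N^{1-N})` on `Ω`. -/
theorem statement9 (N : ℕ) (hN : 2 ≤ N) (α : ℝ)
    (Ω : Set (EuclideanSpace ℝ (Fin N))) (hΩopen : IsOpen Ω)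
    (hΩ : Ω ⊆ {(0 : EuclideanSpace ℝ (Fin N))}ᶜ)
    (u : EuclideanSpace ℝ (Fin N) → ℝ) (hu : ContDiffOn ℝ 2 u Ω)
    (hgrad : ∀ x ∈ Ω, gradient u x ≠ 0)
    (hpde : ∀ x ∈ Ω,
      -ediv (fun y => ‖gradient u y‖ ^ ((N : ℝ) - 2) • gradient u y) x
        = ‖x‖ ^ ((N : ℝ) * α) * Real.exp (u x)) :
    ∀ x ∈ Ω,
      ediv (fun y => ‖gradient (fun w => Real.exp (-(u w) / N)) y‖ ^ ((N : ℝ) - 2) •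
          gradient (fun w => Real.exp (-(u w) / N)) y) x
        = (1 / Real.exp (-(u x) / N)) *
            (((N : ℝ) - 1) * ‖gradient (fun w => Real.exp (-(u w) / N)) x‖ ^ (N : ℝ)
              + ‖x‖ ^ ((N : ℝ) * α) * (N : ℝ) ^ ((1 : ℝ) - (N : ℝ))) := by
  intro x hx
  have hE : True := trivial
  set v : EuclideanSpace ℝ (Fin N) → ℝ := fun w => Real.exp (-(u w) / (N:ℝ)) with hv_def
  have hNpos : (0:ℝ) < N := by positivity
  have hvpos : ∀ y, 0 < v y := fun y => Real.exp_pos _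
  have hdiff : ∀ y ∈ Ω, DifferentiableAt ℝ u y := fun y hy =>
    (hu.contDiffAt (hΩopen.mem_nhds hy)).differentiableAt (by norm_num)
  -- derivative of v
  have hvF : ∀ y, DifferentiableAt ℝ u y →
      HasFDerivAt v ((-(v y)/(N:ℝ)) • fderiv ℝ u y) y := by
    intro y hy
    have h := (hy.hasFDerivAt.const_mul ((-1:ℝ)/(N:ℝ))).exp
    have e : (fun w => Real.exp (((-1:ℝ)/(N:ℝ)) * u w)) = v := by
      funext w; rw [hv_def]; congr 1; ring
    rw [e] at h
    have e2 : Real.exp (((-1:ℝ)/(N:ℝ)) * u y) • (((-1:ℝ)/(N:ℝ)) • fderiv ℝ u y)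
        = (-(v y)/(N:ℝ)) • fderiv ℝ u y := by
      rw [smul_smul]; congr 1
      rw [show ((-1:ℝ)/(N:ℝ)) * u y = -(u y)/(N:ℝ) by ring]
      rw [hv_def]; ring
    rw [e2] at h
    exact h
  have hgradv : ∀ y ∈ Ω, gradient v y = (-(v y)/(N:ℝ)) • gradient u y := by
    intro y hy
    unfold gradient
    rw [(hvF y (hdiff y hy)).fderiv, _root_.map_smul]
  have hnormv : ∀ y ∈ Ω, ‖gradient v y‖ = (v y / N) * ‖gradient u y‖ := by
    intro y hy
    rw [hgradv y hy, norm_smul, Real.norm_eq_abs, abs_div, abs_neg,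
      abs_of_pos (hvpos y), abs_of_pos hNpos]
    -- setup at x
  have hgpos : (0:ℝ) < ‖gradient u x‖ := norm_pos_iff.mpr (hgrad x hx)
  have hWpos : ∀ y, (0:ℝ) < (N:ℝ)⁻¹ * v y := fun y => by positivity
  have hEq : ∀ y ∈ Ω,
      ‖gradient v y‖ ^ ((N:ℝ)-2) • gradient v y
        = (-(((N:ℝ)⁻¹ * v y) ^ ((N:ℝ)-1))) •
            (‖gradient u y‖ ^ ((N:ℝ)-2) • gradient u y) := by
    intro y hy
    rw [hnormv y hy, hgradv y hy, smul_smul, smul_smul]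
    congr 1
    rw [show v y / (N:ℝ) * ‖gradient u y‖ = ((N:ℝ)⁻¹ * v y) * ‖gradient u y‖ by ring]
    rw [Real.mul_rpow (le_of_lt (hWpos y)) (norm_nonneg _)]
    rw [show ((N:ℝ)-1) = ((N:ℝ)-2) + 1 by ring, Real.rpow_add (hWpos y), Real.rpow_one]
    ring
  have hev : (fun y => ‖gradient v y‖ ^ ((N:ℝ)-2) • gradient v y) =ᶠ[𝓝 x]
      (fun y => (-(((N:ℝ)⁻¹ * v y) ^ ((N:ℝ)-1))) •
        (‖gradient u y‖ ^ ((N:ℝ)-2) • gradient u y)) :=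
    Filter.eventuallyEq_of_mem (hΩopen.mem_nhds hx) (fun y hy => hEq y hy)
  have hu2 : ContDiffAt ℝ 2 u x := hu.contDiffAt (hΩopen.mem_nhds hx)
  have hgc : ContDiffAt ℝ 1 (gradient u) x := by
    have h1 : ContDiffAt ℝ 1 (fderiv ℝ u) x := hu2.fderiv_right (by norm_num)
    have h2 : ContDiff ℝ 1 (fun ℓ : (EuclideanSpace ℝ (Fin N)) →L[ℝ] ℝ =>
        (InnerProductSpace.toDual ℝ (EuclideanSpace ℝ (Fin N))).symm ℓ) :=
      (InnerProductSpace.toDual ℝ (EuclideanSpace ℝ (Fin N))).symm.contDiff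
    exact h2.contDiffAt.comp x h1
  have hrc : ContDiffAt ℝ 1 (fun y => ‖gradient u y‖) x := hgc.norm ℝ (hgrad x hx)
  have hFud : DifferentiableAt ℝ
      (fun y => ‖gradient u y‖ ^ ((N:ℝ)-2) • gradient u y) x :=
    ((hrc.rpow_const_of_ne (ne_of_gt hgpos)).smul hgc).differentiableAt one_ne_zero
  have hvx := hvF x (hdiff x hx)
  have hc : HasFDerivAt (fun y => -((((N:ℝ)⁻¹ * v y)) ^ ((N:ℝ)-1)))
      (-((((N:ℝ)-1) * ((N:ℝ)⁻¹ * v x) ^ (((N:ℝ)-1) - 1)) •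
        ((N:ℝ)⁻¹ • ((-(v x)/(N:ℝ)) • fderiv ℝ u x)))) x :=
    ((hvx.const_mul ((N:ℝ)⁻¹)).rpow_const (Or.inl (ne_of_gt (hWpos x)))).neg
  -- divergence computation
  have hediv : ediv (fun y => ‖gradient v y‖ ^ ((N:ℝ)-2) • gradient v y) x
      = (-(((N:ℝ)⁻¹ * v x) ^ ((N:ℝ)-1))) *
          ediv (fun y => ‖gradient u y‖ ^ ((N:ℝ)-2) • gradient u y) x
        + (fderiv ℝ (fun y => -((((N:ℝ)⁻¹ * v y)) ^ ((N:ℝ)-1))) x)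
            (‖gradient u x‖ ^ ((N:ℝ)-2) • gradient u x) := by
    unfold ediv
    rw [hev.fderiv_eq]
    rw [fderiv_fun_smul hc.differentiableAt hFud]
    simp only [ContinuousLinearMap.add_apply, ContinuousLinearMap.smul_apply,
      ContinuousLinearMap.smulRight_apply, PiLp.add_apply, PiLp.smul_apply, smul_eq_mul]
    rw [Finset.sum_add_distrib, ← Finset.mul_sum]
    congr 1
    set ℓ := fderiv ℝ (fun y => -((((N:ℝ)⁻¹ * v y)) ^ ((N:ℝ)-1))) x with hl
    set w := ‖gradient u x‖ ^ ((N:ℝ)-2) • gradient u x with hw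
    calc ∑ i, ℓ (EuclideanSpace.single i 1) * w i
        = ∑ i, ℓ (w i • EuclideanSpace.single i 1) := by
          refine Finset.sum_congr rfl (fun i _ => ?_)
          rw [_root_.map_smul, smul_eq_mul]; ring
      _ = ℓ (∑ i, w i • EuclideanSpace.single i 1) := by rw [← map_sum]
      _ = ℓ w := by
          congr 1
          have hb := (EuclideanSpace.basisFun (Fin N) ℝ).sum_repr w
          simpa [EuclideanSpace.basisFun_apply, EuclideanSpace.basisFun_repr] using hb
    -- evaluate
  have hDval : fderiv ℝ u x (gradient u x) = ‖gradient u x‖ ^ 2 := by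
    rw [← InnerProductSpace.toDual_symm_apply]
    exact real_inner_self_eq_norm_sq _
  have hlw : (fderiv ℝ (fun y => -((((N:ℝ)⁻¹ * v y)) ^ ((N:ℝ)-1))) x)
      (‖gradient u x‖ ^ ((N:ℝ)-2) • gradient u x)
      = -((((N:ℝ)-1) * ((N:ℝ)⁻¹ * v x) ^ (((N:ℝ)-1) - 1)) *
          ((N:ℝ)⁻¹ * ((-(v x)/(N:ℝ)) * (‖gradient u x‖ ^ ((N:ℝ)-2) * ‖gradient u x‖ ^ 2)))) := by
    rw [hc.fderiv]
    simp only [ContinuousLinearMap.neg_apply, ContinuousLinearMap.smul_apply, smul_eq_mul,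
      _root_.map_smul, hDval]
    ring
  have hpde' : ediv (fun y => ‖gradient u y‖ ^ ((N:ℝ)-2) • gradient u y) x
      = -(‖x‖ ^ ((N:ℝ) * α) * Real.exp (u x)) := by
    have := hpde x hx; linarith
  rw [hediv, hlw, hpde', hnormv x hx]
  have he : Real.exp (u x) = v x ^ (-(N:ℝ)) := by
    show _ = Real.exp (-(u x)/(N:ℝ)) ^ (-(N:ℝ))
    rw [Real.rpow_def_of_pos (Real.exp_pos _), Real.log_exp]
    congr 1
    field_simp
  rw [he]
  set V := v x
  set r := ‖gradient u x‖
  set B := ‖x‖ ^ ((N:ℝ) * α)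
  exact key_algebra (N:ℝ) B V r hNpos (hvpos x) hgpos
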